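/- Let p > 0 and q > 0 with q ≠ 1, and let s, θ̃ ∈ ℝ. Let (u, v) be a positive classical solution of the Lane–Emden system −Δu = v^p, −Δv = u^q on ℝ^n. Then for every nonnegative φ ∈ C_c²(ℝ^n): μ₃ ∫ u^q v^{s−1} |∇v|² φ ≥ −(1/(q−1)) ∫ u^{q−1} v^{p+s+1} φ + μ₄ ∫ u^{2q} v^s φ + I₅, where μ₃ = [(s + θ̃q)(s + θ̃(q−2) + 1) + θ̃(θ̃−1)q]/(q(q−1)), μ₄ = (2θ̃(q−1) + s + 1)/(q(q−1)), and I₅ = (1/(q−1)) ∫ u^{q−1} v^{s+1} (∇u·∇φ) − ((2θ̃(q−1) + s + 1)/(q(q−1))) ∫ u^q v^s (∇v·∇φ), all integrals being over ℝ^n. -/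

import Mathlib

open MeasureTheory Real Function
open scoped InnerProductSpace

/-- The Laplacian of a function `f : ℝⁿ → ℝ`, as the sum of its second partial
derivatives. -/
noncomputable def lap {n : ℕ} (f : EuclideanSpace ℝ (Fin n) → ℝ)
    (x : EuclideanSpace ℝ (Fin n)) : ℝ :=
  ∑ i : Fin n, fderiv ℝ (fun y => fderiv ℝ f y (EuclideanSpace.single i 1)) x
    (EuclideanSpace.single i 1)

section Aux
variable {n : ℕ}
local notation "E" => EuclideanSpace ℝ (Fin n)

lemma inner_gradient (f : E → ℝ) (x y : E) :
    ⟪gradient f x, y⟫_ℝ = fderiv ℝ f x y :=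
  InnerProductSpace.toDual_symm_apply

lemma gradient_apply (f : E → ℝ) (x : E) (i : Fin n) :
    gradient f x i = fderiv ℝ f x (EuclideanSpace.single i 1) := by
  rw [← inner_gradient, EuclideanSpace.inner_single_right]
  simp

lemma inner_grad_sum (f g : E → ℝ) (x : E) :
    ⟪gradient f x, gradient g x⟫_ℝ
      = ∑ i, fderiv ℝ f x (EuclideanSpace.single i 1)
          * fderiv ℝ g x (EuclideanSpace.single i 1) := by
  rw [PiLp.inner_apply]
  refine Finset.sum_congr rfl fun i _ => ?_
  rw [← gradient_apply, ← gradient_apply]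
  simp [RCLike.inner_apply]; ring

lemma grad_cont (f : E → ℝ) (hf : ContDiff ℝ 2 f) : Continuous (fun x => gradient f x) :=
  (InnerProductSpace.toDual ℝ (EuclideanSpace ℝ (Fin n))).symm.continuous.comp
    (hf.continuous_fderiv (by norm_num))

lemma fderiv_zero_off {g : E → ℝ} {x : E} (hx : x ∉ tsupport g) : fderiv ℝ g x = 0 := by
  by_contra h
  exact hx (support_fderiv_subset ℝ (Function.mem_support.mpr h))

lemma grad_zero_off {g : E → ℝ} {x : E} (hx : x ∉ tsupport g) : gradient g x = 0 := by
  rw [gradient, fderiv_zero_off hx]; simp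

lemma hcs_of_vanishing {g h : E → ℝ} (hh : HasCompactSupport h)
    (h0 : ∀ x, x ∉ tsupport h → g x = 0) : HasCompactSupport g := by
  have hsub : Function.support g ⊆ tsupport h := fun x hx => by
    by_contra hc
    exact hx (h0 x hc)
  exact IsCompact.of_isClosed_subset hh isClosed_closure
    (closure_minimal hsub (isClosed_tsupport h))

lemma contD (g : E → ℝ) (hg : ContDiff ℝ 1 g) (w : E) :
    Continuous fun x => fderiv ℝ g x w :=
  ((ContinuousLinearMap.apply ℝ ℝ w).continuous).comp (hg.continuous_fderiv one_ne_zero)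

theorem green (f G : E → ℝ) (hf : ContDiff ℝ 2 f) (hG : ContDiff ℝ 1 G)
    (hGc : HasCompactSupport G) :
    ∑ i : Fin n, ∫ x, fderiv ℝ G x (EuclideanSpace.single i 1)
        * fderiv ℝ f x (EuclideanSpace.single i 1)
      = -∫ x, G x * lap f x := by
  obtain ⟨R, hR0, hR⟩ := hGc.isBounded.subset_ball_lt 0 (0 : E)
  set b : ContDiffBump (0 : E) := ⟨R, R + 1, hR0, by linarith⟩ with hb
  set w : E → ℝ := fun x => b x * f x with hwdef
  have hw : ContDiff ℝ 2 w := b.contDiff.mul hf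
  have hwc : HasCompactSupport w := b.hasCompactSupport.mul_right
  have hball : ∀ x ∈ Metric.ball (0 : E) R, ∀ᶠ y in nhds x, w y = f y := by
    intro x hx
    filter_upwards [Metric.isOpen_ball.eventually_mem hx] with y hy
    have h1 : b y = 1 := b.one_of_mem_closedBall (Metric.ball_subset_closedBall hy)
    simp [hwdef, h1]
  have hd1 : ∀ x ∈ Metric.ball (0 : E) R, fderiv ℝ w x = fderiv ℝ f x :=
    fun x hx => Filter.EventuallyEq.fderiv_eq (hball x hx)
  have hd2 : ∀ (i : Fin n), ∀ x ∈ Metric.ball (0 : E) R,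
      fderiv ℝ (fun y => fderiv ℝ w y (EuclideanSpace.single i 1)) x
        = fderiv ℝ (fun y => fderiv ℝ f y (EuclideanSpace.single i 1)) x := by
    intro i x hx
    apply Filter.EventuallyEq.fderiv_eq
    filter_upwards [Metric.isOpen_ball.eventually_mem hx] with y hy
    rw [hd1 y hy]
  have hGz : ∀ x, x ∉ Metric.ball (0 : E) R → fderiv ℝ G x = 0 ∧ G x = 0 := by
    intro x hx
    have hxs : x ∉ tsupport G := fun h => hx (hR h)
    exact ⟨fderiv_zero_off hxs, image_eq_zero_of_notMem_tsupport hxs⟩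
  have hFi : ∀ i : Fin n, ContDiff ℝ 1 (fun x => fderiv ℝ w x (EuclideanSpace.single i 1)) := by
    intro i
    have h1 : ContDiff ℝ 1 (fderiv ℝ w) := hw.fderiv_right (by norm_num)
    exact (ContinuousLinearMap.apply ℝ ℝ (EuclideanSpace.single i 1)).contDiff.comp h1
  have hFic : ∀ i : Fin n, HasCompactSupport
      (fun x => fderiv ℝ w x (EuclideanSpace.single i 1)) := by
    intro i
    refine hcs_of_vanishing hwc fun x hx => ?_
    rw [fderiv_zero_off hx]; rfl
  have key : ∀ i : Fin n, (∫ x, fderiv ℝ G x (EuclideanSpace.single i 1)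
        * fderiv ℝ f x (EuclideanSpace.single i 1))
      = -∫ x, fderiv ℝ (fun y => fderiv ℝ w y (EuclideanSpace.single i 1)) x
          (EuclideanSpace.single i 1) * G x := by
    intro i
    obtain ⟨C, hC⟩ := (hFi i).lipschitzWith_of_hasCompactSupport (hFic i) one_ne_zero
    obtain ⟨D, hD⟩ := hG.lipschitzWith_of_hasCompactSupport hGc one_ne_zero
    have h2 := hC.integral_lineDeriv_mul_eq (μ := volume) hD hGc (EuclideanSpace.single i 1)
    have e1 : ∀ x : E, lineDeriv ℝ (fun y => fderiv ℝ w y (EuclideanSpace.single i 1)) x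
        (EuclideanSpace.single i 1)
        = fderiv ℝ (fun y => fderiv ℝ w y (EuclideanSpace.single i 1)) x
            (EuclideanSpace.single i 1) :=
      fun x => ((hFi i).differentiable one_ne_zero x).lineDeriv_eq_fderiv
    have e2 : ∀ x : E, lineDeriv ℝ G x (-(EuclideanSpace.single i 1))
        = -(fderiv ℝ G x (EuclideanSpace.single i 1)) := by
      intro x
      rw [(hG.differentiable one_ne_zero x).lineDeriv_eq_fderiv, map_neg]
    simp only [e1, e2, neg_mul] at h2
    rw [integral_neg] at h2
    have e3 : (∫ x, fderiv ℝ G x (EuclideanSpace.single i 1)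
          * fderiv ℝ f x (EuclideanSpace.single i 1))
        = ∫ x, fderiv ℝ G x (EuclideanSpace.single i 1)
            * fderiv ℝ w x (EuclideanSpace.single i 1) := by
      refine integral_congr_ae (Filter.Eventually.of_forall fun x => ?_)
      beta_reduce
      by_cases hx : x ∈ Metric.ball (0 : E) R
      · rw [hd1 x hx]
      · rw [(hGz x hx).1]; simp
    rw [e3]
    linarith [h2]
  calc ∑ i : Fin n, ∫ x, fderiv ℝ G x (EuclideanSpace.single i 1)
        * fderiv ℝ f x (EuclideanSpace.single i 1)
      = ∑ i : Fin n, -∫ x, fderiv ℝ (fun y => fderiv ℝ w y (EuclideanSpace.single i 1)) x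
          (EuclideanSpace.single i 1) * G x := Finset.sum_congr rfl fun i _ => key i
    _ = -∑ i : Fin n, ∫ x, fderiv ℝ (fun y => fderiv ℝ w y (EuclideanSpace.single i 1)) x
          (EuclideanSpace.single i 1) * G x := by rw [Finset.sum_neg_distrib]
    _ = -∫ x, ∑ i : Fin n, fderiv ℝ (fun y => fderiv ℝ w y (EuclideanSpace.single i 1)) x
          (EuclideanSpace.single i 1) * G x := by
        rw [integral_finset_sum]
        intro i _
        refine Continuous.integrable_of_hasCompactSupport
          ((contD _ (hFi i) _).mul hG.continuous) ?_
        exact hcs_of_vanishing hGc fun x hx => by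
          rw [image_eq_zero_of_notMem_tsupport hx, mul_zero]
    _ = -∫ x, G x * lap f x := by
        congr 1
        refine integral_congr_ae (Filter.Eventually.of_forall fun x => ?_)
        beta_reduce
        by_cases hx : x ∈ Metric.ball (0 : E) R
        · have h4 : ∀ i : Fin n,
              fderiv ℝ (fun y => fderiv ℝ w y (EuclideanSpace.single i 1)) x
                  (EuclideanSpace.single i 1)
                = fderiv ℝ (fun y => fderiv ℝ f y (EuclideanSpace.single i 1)) x
                  (EuclideanSpace.single i 1) := fun i => by rw [hd2 i x hx]
          simp only [h4]
          rw [lap, Finset.mul_sum]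
          exact Finset.sum_congr rfl fun i _ => mul_comm _ _
        · simp [(hGz x hx).2]

end Aux

theorem key_estimates (n : ℕ) (p q s θ' : ℝ) (hp : 0 < p) (hq : 0 < q)
    (hq1 : q ≠ 1)
    (u v : EuclideanSpace ℝ (Fin n) → ℝ)
    (hu : ContDiff ℝ 2 u) (hv : ContDiff ℝ 2 v)
    (hu0 : ∀ x, 0 < u x) (hv0 : ∀ x, 0 < v x)
    (hue : ∀ x, -lap u x = v x ^ p) (hve : ∀ x, -lap v x = u x ^ q)
    (φ : EuclideanSpace ℝ (Fin n) → ℝ) (hφ : ContDiff ℝ 2 φ)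
    (hφc : HasCompactSupport φ) (hφ0 : ∀ x, 0 ≤ φ x) :
    ((s + θ' * q) * (s + θ' * (q - 2) + 1) + θ' * (θ' - 1) * q) / (q * (q - 1)) *
        (∫ x, u x ^ q * v x ^ (s - 1) * ‖gradient v x‖ ^ 2 * φ x)
    ≥ -(1 / (q - 1)) * (∫ x, u x ^ (q - 1) * v x ^ (p + s + 1) * φ x)
      + (2 * θ' * (q - 1) + s + 1) / (q * (q - 1)) *
        (∫ x, u x ^ (2 * q) * v x ^ s * φ x)
      + ((1 / (q - 1)) *
          (∫ x, u x ^ (q - 1) * v x ^ (s + 1) *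
            ⟪gradient u x, gradient φ x⟫_ℝ)
        - (2 * θ' * (q - 1) + s + 1) / (q * (q - 1)) *
          (∫ x, u x ^ q * v x ^ s * ⟪gradient v x, gradient φ x⟫_ℝ)) := by
  have hu1 : ContDiff ℝ 1 u := hu.of_le (by norm_num)
  have hv1 : ContDiff ℝ 1 v := hv.of_le (by norm_num)
  have hφ1 : ContDiff ℝ 1 φ := hφ.of_le (by norm_num)
  have hud : ∀ x, HasFDerivAt u (fderiv ℝ u x) x :=
    fun x => (hu1.differentiable one_ne_zero x).hasFDerivAt
  have hvd : ∀ x, HasFDerivAt v (fderiv ℝ v x) x :=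
    fun x => (hv1.differentiable one_ne_zero x).hasFDerivAt
  have hφd : ∀ x, HasFDerivAt φ (fderiv ℝ φ x) x :=
    fun x => (hφ1.differentiable one_ne_zero x).hasFDerivAt
  have hup : ∀ (a : ℝ) (x), HasFDerivAt (fun y => u y ^ a)
      ((a * u x ^ (a - 1)) • fderiv ℝ u x) x :=
    fun a x => (hud x).rpow_const (Or.inl (hu0 x).ne')
  have hvp : ∀ (a : ℝ) (x), HasFDerivAt (fun y => v y ^ a)
      ((a * v x ^ (a - 1)) • fderiv ℝ v x) x :=
    fun a x => (hvd x).rpow_const (Or.inl (hv0 x).ne')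
  have hupc : ∀ a : ℝ, ContDiff ℝ 1 (fun y => u y ^ a) := fun a =>
    contDiff_iff_contDiffAt.mpr fun x => hu1.contDiffAt.rpow_const_of_ne (hu0 x).ne'
  have hvpc : ∀ a : ℝ, ContDiff ℝ 1 (fun y => v y ^ a) := fun a =>
    contDiff_iff_contDiffAt.mpr fun x => hv1.contDiffAt.rpow_const_of_ne (hv0 x).ne'
  have hPc : ∀ a b : ℝ, ContDiff ℝ 1 (fun y => u y ^ a * v y ^ b * φ y) :=
    fun a b => ((hupc a).mul (hvpc b)).mul hφ1
  have hts : ∀ a b : ℝ, tsupport (fun y => u y ^ a * v y ^ b * φ y) ⊆ tsupport φ :=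
    fun a b => closure_minimal
      (fun y hy => subset_closure (Function.mem_support.mpr
        (fun h => (Function.mem_support.mp hy) (by rw [h, mul_zero]))))
      (isClosed_tsupport φ)
  have hPcs : ∀ a b : ℝ, HasCompactSupport (fun y => u y ^ a * v y ^ b * φ y) :=
    fun a b => hcs_of_vanishing hφc fun x hx => by
      rw [image_eq_zero_of_notMem_tsupport hx, mul_zero]
  have hPd : ∀ (a b : ℝ) (x) (i : Fin n),
      fderiv ℝ (fun y => u y ^ a * v y ^ b * φ y) x (EuclideanSpace.single i 1) =
        a * u x ^ (a - 1) * v x ^ b * φ x * fderiv ℝ u x (EuclideanSpace.single i 1)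
        + b * u x ^ a * v x ^ (b - 1) * φ x * fderiv ℝ v x (EuclideanSpace.single i 1)
        + u x ^ a * v x ^ b * fderiv ℝ φ x (EuclideanSpace.single i 1) := by
    intro a b x i
    have H : HasFDerivAt (fun y => u y ^ a * v y ^ b * φ y) _ x :=
      ((hup a x).mul (hvp b x)).mul (hφd x)
    rw [H.fderiv]
    simp only [ContinuousLinearMap.add_apply, ContinuousLinearMap.smul_apply, smul_eq_mul, Pi.mul_apply]
    ring
  have integφ : ∀ g : EuclideanSpace ℝ (Fin n) → ℝ, Continuous g →
      (∀ x, x ∉ tsupport φ → g x = 0) → Integrable g :=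
    fun g hg h0 => hg.integrable_of_hasCompactSupport (hcs_of_vanishing hφc h0)
  have cu : ∀ a : ℝ, Continuous fun x => u x ^ a := fun a => (hupc a).continuous
  have cv : ∀ a : ℝ, Continuous fun x => v x ^ a := fun a => (hvpc a).continuous
  have cgu : Continuous fun x => gradient u x := grad_cont u hu
  have cgv : Continuous fun x => gradient v x := grad_cont v hv
  have cgφ : Continuous fun x => gradient φ x := grad_cont φ hφ
  -- integrability of all the relevant integrands
  have intI : Integrable (fun x => u x ^ q * v x ^ (s - 1) * ‖gradient v x‖ ^ 2 * φ x) :=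
    integφ _ ((((cu q).mul (cv (s - 1))).mul (cgv.norm.pow 2)).mul hφ.continuous)
      (fun x hx => by rw [image_eq_zero_of_notMem_tsupport hx, mul_zero])
  have intA : Integrable
      (fun x => u x ^ (q - 1) * v x ^ s * φ x * ⟪gradient u x, gradient v x⟫_ℝ) :=
    integφ _ ((((cu (q - 1)).mul (cv s)).mul hφ.continuous).mul (cgu.inner cgv))
      (fun x hx => by rw [image_eq_zero_of_notMem_tsupport hx, mul_zero, zero_mul])
  have intB : Integrable
      (fun x => u x ^ (q - 2) * v x ^ (s + 1) * φ x * ‖gradient u x‖ ^ 2) :=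
    integφ _ ((((cu (q - 2)).mul (cv (s + 1))).mul hφ.continuous).mul (cgu.norm.pow 2))
      (fun x hx => by rw [image_eq_zero_of_notMem_tsupport hx, mul_zero, zero_mul])
  have intEu : Integrable
      (fun x => u x ^ (q - 1) * v x ^ (s + 1) * ⟪gradient u x, gradient φ x⟫_ℝ) :=
    integφ _ (((cu (q - 1)).mul (cv (s + 1))).mul (cgu.inner cgφ))
      (fun x hx => by rw [grad_zero_off hx]; simp)
  have intEv : Integrable
      (fun x => u x ^ q * v x ^ s * ⟪gradient v x, gradient φ x⟫_ℝ) :=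
    integφ _ (((cu q).mul (cv s)).mul (cgv.inner cgφ))
      (fun x hx => by rw [grad_zero_off hx]; simp)
  have intterm : ∀ (a b : ℝ) (g : EuclideanSpace ℝ (Fin n) → ℝ), ContDiff ℝ 1 g →
      ∀ i : Fin n, Integrable (fun x =>
        fderiv ℝ (fun y => u y ^ a * v y ^ b * φ y) x (EuclideanSpace.single i 1)
          * fderiv ℝ g x (EuclideanSpace.single i 1)) :=
    fun a b g hg i => integφ _ ((contD _ (hPc a b) _).mul (contD _ hg _))
      (fun x hx => by
        rw [fderiv_zero_off (fun hmem => hx (hts a b hmem)),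
          ContinuousLinearMap.zero_apply, zero_mul])
  -- Identity (1)
  have h1 : q * (∫ x, u x ^ (q - 1) * v x ^ s * φ x * ⟪gradient u x, gradient v x⟫_ℝ)
        + s * (∫ x, u x ^ q * v x ^ (s - 1) * ‖gradient v x‖ ^ 2 * φ x)
        + (∫ x, u x ^ q * v x ^ s * ⟪gradient v x, gradient φ x⟫_ℝ)
      = ∫ x, u x ^ (2 * q) * v x ^ s * φ x := by
    have hg := green v (fun y => u y ^ q * v y ^ s * φ y) hv (hPc q s) (hPcs q s)
    have hL1 : (∑ i : Fin n, ∫ x,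
          fderiv ℝ (fun y => u y ^ q * v y ^ s * φ y) x (EuclideanSpace.single i 1)
            * fderiv ℝ v x (EuclideanSpace.single i 1))
        = q * (∫ x, u x ^ (q - 1) * v x ^ s * φ x * ⟪gradient u x, gradient v x⟫_ℝ)
          + s * (∫ x, u x ^ q * v x ^ (s - 1) * ‖gradient v x‖ ^ 2 * φ x)
          + ∫ x, u x ^ q * v x ^ s * ⟪gradient v x, gradient φ x⟫_ℝ := by
      rw [← integral_finset_sum _ (fun i _ => intterm q s v hv1 i)]
      have hpt : ∀ x, (∑ i : Fin n,
            fderiv ℝ (fun y => u y ^ q * v y ^ s * φ y) x (EuclideanSpace.single i 1)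
              * fderiv ℝ v x (EuclideanSpace.single i 1))
          = q * (u x ^ (q - 1) * v x ^ s * φ x * ⟪gradient u x, gradient v x⟫_ℝ)
            + s * (u x ^ q * v x ^ (s - 1) * ‖gradient v x‖ ^ 2 * φ x)
            + u x ^ q * v x ^ s * ⟪gradient v x, gradient φ x⟫_ℝ := by
        intro x
        rw [← real_inner_self_eq_norm_sq, inner_grad_sum u v, inner_grad_sum v v,
          inner_grad_sum v φ]
        simp only [hPd q s, Finset.mul_sum, Finset.sum_mul]
        rw [← Finset.sum_add_distrib, ← Finset.sum_add_distrib]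
        exact Finset.sum_congr rfl fun i _ => by ring
      simp only [hpt]
      have iadd : Integrable (fun x =>
          q * (u x ^ (q - 1) * v x ^ s * φ x * ⟪gradient u x, gradient v x⟫_ℝ)
          + s * (u x ^ q * v x ^ (s - 1) * ‖gradient v x‖ ^ 2 * φ x)) volume :=
        (intA.const_mul q).add (intI.const_mul s)
      rw [integral_add iadd intEv,
        integral_add (intA.const_mul q) (intI.const_mul s),
        integral_const_mul, integral_const_mul]
    have hR1 : -(∫ x, (fun y => u y ^ q * v y ^ s * φ y) x * lap v x)
        = ∫ x, u x ^ (2 * q) * v x ^ s * φ x := by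
      rw [← integral_neg]
      refine integral_congr_ae (Filter.Eventually.of_forall fun x => ?_)
      beta_reduce
      have hl : lap v x = -(u x ^ q) := by linarith [hve x]
      have hu' : u x ^ (2 * q) = u x ^ q * u x ^ q := by
        rw [show (2 : ℝ) * q = q + q from by ring, Real.rpow_add (hu0 x)]
      rw [hl, hu']
      ring
    exact hL1.symm.trans (hg.trans hR1)
  -- Identity (2)
  have h2 : (q - 1) * (∫ x, u x ^ (q - 2) * v x ^ (s + 1) * φ x * ‖gradient u x‖ ^ 2)
        + (s + 1) * (∫ x, u x ^ (q - 1) * v x ^ s * φ x * ⟪gradient u x, gradient v x⟫_ℝ)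
        + (∫ x, u x ^ (q - 1) * v x ^ (s + 1) * ⟪gradient u x, gradient φ x⟫_ℝ)
      = ∫ x, u x ^ (q - 1) * v x ^ (p + s + 1) * φ x := by
    have hg := green u (fun y => u y ^ (q - 1) * v y ^ (s + 1) * φ y) hu
      (hPc (q - 1) (s + 1)) (hPcs (q - 1) (s + 1))
    have hL2 : (∑ i : Fin n, ∫ x,
          fderiv ℝ (fun y => u y ^ (q - 1) * v y ^ (s + 1) * φ y) x (EuclideanSpace.single i 1)
            * fderiv ℝ u x (EuclideanSpace.single i 1))
        = (q - 1) * (∫ x, u x ^ (q - 2) * v x ^ (s + 1) * φ x * ‖gradient u x‖ ^ 2)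
          + (s + 1) * (∫ x, u x ^ (q - 1) * v x ^ s * φ x * ⟪gradient u x, gradient v x⟫_ℝ)
          + ∫ x, u x ^ (q - 1) * v x ^ (s + 1) * ⟪gradient u x, gradient φ x⟫_ℝ := by
      rw [← integral_finset_sum _ (fun i _ => intterm (q - 1) (s + 1) u hu1 i)]
      have hpt : ∀ x, (∑ i : Fin n,
            fderiv ℝ (fun y => u y ^ (q - 1) * v y ^ (s + 1) * φ y) x (EuclideanSpace.single i 1)
              * fderiv ℝ u x (EuclideanSpace.single i 1))
          = (q - 1) * (u x ^ (q - 2) * v x ^ (s + 1) * φ x * ‖gradient u x‖ ^ 2)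
            + (s + 1) * (u x ^ (q - 1) * v x ^ s * φ x * ⟪gradient u x, gradient v x⟫_ℝ)
            + u x ^ (q - 1) * v x ^ (s + 1) * ⟪gradient u x, gradient φ x⟫_ℝ := by
        intro x
        rw [← real_inner_self_eq_norm_sq, inner_grad_sum u u, inner_grad_sum u v,
          inner_grad_sum u φ]
        simp only [hPd (q - 1) (s + 1), show q - 1 - 1 = q - 2 from by ring,
          show s + 1 - 1 = s from by ring, Finset.mul_sum, Finset.sum_mul]
        rw [← Finset.sum_add_distrib, ← Finset.sum_add_distrib]
        exact Finset.sum_congr rfl fun i _ => by ring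
      simp only [hpt]
      have iadd : Integrable (fun x =>
          (q - 1) * (u x ^ (q - 2) * v x ^ (s + 1) * φ x * ‖gradient u x‖ ^ 2)
          + (s + 1) * (u x ^ (q - 1) * v x ^ s * φ x * ⟪gradient u x, gradient v x⟫_ℝ)) volume :=
        (intB.const_mul (q - 1)).add (intA.const_mul (s + 1))
      rw [integral_add iadd intEu,
        integral_add (intB.const_mul (q - 1)) (intA.const_mul (s + 1)),
        integral_const_mul, integral_const_mul]
    have hR2 : -(∫ x, (fun y => u y ^ (q - 1) * v y ^ (s + 1) * φ y) x * lap u x)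
        = ∫ x, u x ^ (q - 1) * v x ^ (p + s + 1) * φ x := by
      rw [← integral_neg]
      refine integral_congr_ae (Filter.Eventually.of_forall fun x => ?_)
      beta_reduce
      have hl : lap u x = -(v x ^ p) := by linarith [hue x]
      have hv' : v x ^ (p + s + 1) = v x ^ p * v x ^ (s + 1) := by
        rw [show p + s + 1 = p + (s + 1) from by ring, Real.rpow_add (hv0 x)]
      rw [hl, hv']
      ring
    exact hL2.symm.trans (hg.trans hR2)
  -- Inequality (3)
  have h3 : 0 ≤ θ' ^ 2 * (∫ x, u x ^ q * v x ^ (s - 1) * ‖gradient v x‖ ^ 2 * φ x)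
      - 2 * θ' * (∫ x, u x ^ (q - 1) * v x ^ s * φ x * ⟪gradient u x, gradient v x⟫_ℝ)
      + (∫ x, u x ^ (q - 2) * v x ^ (s + 1) * φ x * ‖gradient u x‖ ^ 2) := by
    have hptsq : ∀ x, (u x ^ (q - 2) * v x ^ (s - 1) * φ x)
          * ‖(θ' * u x) • gradient v x - v x • gradient u x‖ ^ 2
        = θ' ^ 2 * (u x ^ q * v x ^ (s - 1) * ‖gradient v x‖ ^ 2 * φ x)
          - 2 * θ' * (u x ^ (q - 1) * v x ^ s * φ x * ⟪gradient u x, gradient v x⟫_ℝ)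
          + u x ^ (q - 2) * v x ^ (s + 1) * φ x * ‖gradient u x‖ ^ 2 := by
      intro x
      have equ2 : u x ^ q = u x ^ (q - 2) * u x * u x := by
        have h' : u x ^ q = u x ^ (q - 2 + 1 + 1) := by congr 1; ring
        rw [h', Real.rpow_add (hu0 x), Real.rpow_add (hu0 x), Real.rpow_one]
      have equ1 : u x ^ (q - 1) = u x ^ (q - 2) * u x := by
        have h' : u x ^ (q - 1) = u x ^ (q - 2 + 1) := by congr 1; ring
        rw [h', Real.rpow_add (hu0 x), Real.rpow_one]
      have eqv2 : v x ^ (s + 1) = v x ^ (s - 1) * v x * v x := by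
        have h' : v x ^ (s + 1) = v x ^ (s - 1 + 1 + 1) := by congr 1; ring
        rw [h', Real.rpow_add (hv0 x), Real.rpow_add (hv0 x), Real.rpow_one]
      have eqv1 : v x ^ s = v x ^ (s - 1) * v x := by
        have h' : v x ^ s = v x ^ (s - 1 + 1) := by congr 1; ring
        rw [h', Real.rpow_add (hv0 x), Real.rpow_one]
      rw [norm_sub_sq_real, norm_smul, norm_smul, real_inner_smul_left, real_inner_smul_right,
        equ2, equ1, eqv2, eqv1]
      simp only [Real.norm_eq_abs]
      rw [mul_pow, mul_pow, sq_abs, sq_abs, real_inner_comm (gradient v x) (gradient u x)]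
      ring
    have h0 : 0 ≤ ∫ x, (u x ^ (q - 2) * v x ^ (s - 1) * φ x)
        * ‖(θ' * u x) • gradient v x - v x • gradient u x‖ ^ 2 :=
      integral_nonneg fun x => mul_nonneg (mul_nonneg (mul_nonneg
        (Real.rpow_nonneg (hu0 x).le _) (Real.rpow_nonneg (hv0 x).le _)) (hφ0 x))
        (pow_nonneg (norm_nonneg _) 2)
    have hsplit : (∫ x, (u x ^ (q - 2) * v x ^ (s - 1) * φ x)
          * ‖(θ' * u x) • gradient v x - v x • gradient u x‖ ^ 2)
        = θ' ^ 2 * (∫ x, u x ^ q * v x ^ (s - 1) * ‖gradient v x‖ ^ 2 * φ x)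
          - 2 * θ' * (∫ x, u x ^ (q - 1) * v x ^ s * φ x * ⟪gradient u x, gradient v x⟫_ℝ)
          + (∫ x, u x ^ (q - 2) * v x ^ (s + 1) * φ x * ‖gradient u x‖ ^ 2) := by
      simp only [hptsq]
      have isub : Integrable (fun x =>
          θ' ^ 2 * (u x ^ q * v x ^ (s - 1) * ‖gradient v x‖ ^ 2 * φ x)
          - 2 * θ' * (u x ^ (q - 1) * v x ^ s * φ x * ⟪gradient u x, gradient v x⟫_ℝ)) volume :=
        (intI.const_mul (θ' ^ 2)).sub (intA.const_mul (2 * θ'))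
      rw [integral_add isub intB,
        integral_sub (intI.const_mul (θ' ^ 2)) (intA.const_mul (2 * θ')),
        integral_const_mul, integral_const_mul]
    rw [← hsplit]
    exact h0
  -- final algebra
  have hq0 : q ≠ 0 := ne_of_gt hq
  have hq1' : q - 1 ≠ 0 := sub_ne_zero.mpr hq1
  have keyeq : -(1 / (q - 1)) * (∫ x, u x ^ (q - 1) * v x ^ (p + s + 1) * φ x)
      + (2 * θ' * (q - 1) + s + 1) / (q * (q - 1)) *
        (∫ x, u x ^ (2 * q) * v x ^ s * φ x)
      + ((1 / (q - 1)) *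
          (∫ x, u x ^ (q - 1) * v x ^ (s + 1) *
            ⟪gradient u x, gradient φ x⟫_ℝ)
        - (2 * θ' * (q - 1) + s + 1) / (q * (q - 1)) *
          (∫ x, u x ^ q * v x ^ s * ⟪gradient v x, gradient φ x⟫_ℝ))
      = ((s + θ' * q) * (s + θ' * (q - 2) + 1) + θ' * (θ' - 1) * q) / (q * (q - 1)) *
          (∫ x, u x ^ q * v x ^ (s - 1) * ‖gradient v x‖ ^ 2 * φ x)
        - (θ' ^ 2 * (∫ x, u x ^ q * v x ^ (s - 1) * ‖gradient v x‖ ^ 2 * φ x)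
          - 2 * θ' * (∫ x, u x ^ (q - 1) * v x ^ s * φ x * ⟪gradient u x, gradient v x⟫_ℝ)
          + (∫ x, u x ^ (q - 2) * v x ^ (s + 1) * φ x * ‖gradient u x‖ ^ 2)) := by
    rw [← h1, ← h2]
    field_simp
    ring
  rw [ge_iff_le, keyeq]
  linarith [h3]
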